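/- For all real x > -1, (1+x)·ln(1+x) − x ≥ x² / ((2/3)·x + 2). -/

import Mathlib

open Set

private noncomputable def auxF : ℝ → ℝ :=
  fun x => Real.log (1 + x) - (5 * x ^ 2 + 6 * x) / (2 * x ^ 2 + 8 * x + 6)

private theorem auxF_hasDerivAt (x : ℝ) (hx : x > -1) :
    HasDerivAt auxF (x ^ 3 / ((x + 1) ^ 2 * (x + 3) ^ 2)) x := by
  have h1 : (1 : ℝ) + x ≠ 0 := by linarith
  have hfac : 2 * x ^ 2 + 8 * x + 6 = 2 * (x + 1) * (x + 3) := by ring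
  have hd : 2 * x ^ 2 + 8 * x + 6 ≠ 0 := by
    have := mul_pos (by linarith : (0:ℝ) < x + 1) (by linarith : (0:ℝ) < x + 3)
    nlinarith
  have hlog : HasDerivAt (fun x : ℝ => Real.log (1 + x)) (1 / (1 + x)) x := by
    simpa using ((hasDerivAt_id x).const_add 1).log h1
  have hnum : HasDerivAt (fun x : ℝ => 5 * x ^ 2 + 6 * x) (10 * x + 6) x := by
    have h := ((hasDerivAt_pow 2 x).const_mul 5).add ((hasDerivAt_id x).const_mul 6)
    refine h.congr_deriv ?_
    push_cast; ring
  have hden : HasDerivAt (fun x : ℝ => 2 * x ^ 2 + 8 * x + 6) (4 * x + 8) x := by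
    have h := (((hasDerivAt_pow 2 x).const_mul 2).add ((hasDerivAt_id x).const_mul 8)).add_const 6
    refine h.congr_deriv ?_
    push_cast; ring
  have hdiv := hnum.div hden hd
  have h := hlog.sub hdiv
  refine (h.congr_deriv ?_).congr_deriv rfl
  rw [hfac]
  have h3 : (x + 3 : ℝ) ≠ 0 := by linarith
  have h1' : (x + 1 : ℝ) ≠ 0 := by linarith
  field_simp
  ring

private theorem auxF_nonneg (x : ℝ) (hx : x > -1) : 0 ≤ auxF x := by
  have h0 : auxF 0 = 0 := by simp [auxF]
  rcases le_or_gt 0 x with hx0 | hx0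
  · -- monotone on [0, ∞)
    have hmono : MonotoneOn auxF (Ici 0) := by
      apply monotoneOn_of_deriv_nonneg (convex_Ici 0)
      · intro y hy
        exact (auxF_hasDerivAt y (by simp at hy; linarith)).differentiableAt.continuousAt.continuousWithinAt
      · intro y hy
        rw [interior_Ici] at hy
        exact (auxF_hasDerivAt y (by simp at hy; linarith)).differentiableAt.differentiableWithinAt
      · intro y hy
        rw [interior_Ici] at hy
        simp only [mem_Ioi] at hy
        rw [(auxF_hasDerivAt y (by linarith)).deriv]
        positivity
    calc 0 = auxF 0 := h0.symm
    _ ≤ auxF x := hmono (by simp) (by simpa using hx0) hx0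
  · -- antitone on (-1, 0]
    have hanti : AntitoneOn auxF (Ioc (-1) 0) := by
      apply antitoneOn_of_deriv_nonpos (convex_Ioc (-1) 0)
      · intro y hy
        exact (auxF_hasDerivAt y hy.1).differentiableAt.continuousAt.continuousWithinAt
      · intro y hy
        rw [interior_Ioc] at hy
        exact (auxF_hasDerivAt y hy.1).differentiableAt.differentiableWithinAt
      · intro y hy
        rw [interior_Ioc] at hy
        obtain ⟨hy1, hy2⟩ := hy
        rw [(auxF_hasDerivAt y hy1).deriv]
        have hden : (0:ℝ) < (y + 1) ^ 2 * (y + 3) ^ 2 := by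
          have : (y+1) ≠ 0 := by linarith
          have : (y+3) ≠ 0 := by linarith
          positivity
        have hnum : y ^ 3 ≤ 0 := Odd.pow_nonpos ⟨1, by norm_num⟩ hy2.le
        exact div_nonpos_of_nonpos_of_nonneg hnum hden.le
    calc 0 = auxF 0 := h0.symm
    _ ≤ auxF x := hanti ⟨hx, hx0.le⟩ (by simp) hx0.le

theorem stmt_0 (x : ℝ) (hx : x > -1) :
    (1 + x) * Real.log (1 + x) - x ≥ x ^ 2 / ((2 / 3) * x + 2) := by
  have h1 : (0:ℝ) < 1 + x := by linarith
  have h3 : (0:ℝ) < x + 3 := by linarith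
  have hd : (2:ℝ) * x ^ 2 + 8 * x + 6 ≠ 0 := by nlinarith
  have hF := auxF_nonneg x hx
  have hlog : (5 * x ^ 2 + 6 * x) / (2 * x ^ 2 + 8 * x + 6) ≤ Real.log (1 + x) := by
    simpa [auxF, sub_nonneg] using hF
  have hkey : x ^ 2 / ((2 / 3) * x + 2) =
      (1 + x) * ((5 * x ^ 2 + 6 * x) / (2 * x ^ 2 + 8 * x + 6)) - x := by
    have h23 : (0:ℝ) < 2 / 3 * x + 2 := by linarith
    rw [div_eq_iff h23.ne', mul_div_assoc', sub_mul, div_mul_eq_mul_div, eq_sub_iff_add_eq,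
      eq_div_iff hd]
    ring
  rw [ge_iff_le, hkey]
  have := mul_le_mul_of_nonneg_left hlog h1.le
  linarith
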